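/- For any positive reals a, b, c and T_max, the function E(T) = a/(T_max − T)² + c·T·(2^{b/T} − 1) is strictly convex on the open interval (0, T_max). -/

import Mathlib

private lemma aux_strict (a c k Tmax : ℝ) (ha : 0 < a) (hc : 0 < c) (hk : 0 < k)
    (hT : 0 < Tmax) :
    StrictConvexOn ℝ (Set.Ioo (0 : ℝ) Tmax)
      (fun x : ℝ => a * ((Tmax - x) ^ 2)⁻¹ + c * x * (Real.exp (k / x) - 1)) := by
  have hderiv : ∀ x ∈ Set.Ioo (0 : ℝ) Tmax,
      HasDerivAt (fun x : ℝ => a * ((Tmax - x) ^ 2)⁻¹ + c * x * (Real.exp (k / x) - 1))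
        (2 * a * ((Tmax - x) ^ 3)⁻¹ + c * (Real.exp (k / x) * (1 - k / x) - 1)) x := by
    intro x hx
    have hx0 : x ≠ 0 := ne_of_gt hx.1
    have hTx : (0:ℝ) < Tmax - x := sub_pos.mpr hx.2
    have hTx0 : Tmax - x ≠ 0 := ne_of_gt hTx
    have h1 : HasDerivAt (fun y : ℝ => Tmax - y) (-1) x := by
      simpa using (hasDerivAt_id x).const_sub Tmax
    have h3 : HasDerivAt (fun y : ℝ => a * ((Tmax - y) ^ 2)⁻¹)
        (a * (-(2 * (Tmax - x) ^ 1 * (-1)) / ((Tmax - x) ^ 2) ^ 2)) x :=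
      ((h1.pow 2).inv (pow_ne_zero 2 hTx0)).const_mul a
    have h4 : HasDerivAt (fun y : ℝ => k / y) (k * -(x ^ 2)⁻¹) x := by
      simpa [div_eq_mul_inv] using (hasDerivAt_inv hx0).const_mul k
    have h5 : HasDerivAt (fun y : ℝ => Real.exp (k / y) - 1)
        (Real.exp (k / x) * (k * -(x ^ 2)⁻¹)) x := (h4.exp).sub_const 1
    have h6 : HasDerivAt (fun y : ℝ => c * y) c x := by
      simpa using (hasDerivAt_id x).const_mul c
    have h7 := h6.mul h5
    have h8 := h3.add h7
    convert h8 using 1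
    · rfl
    · rfl
    · rfl
    · field_simp
      ring
  have hderiv2 : ∀ x ∈ Set.Ioo (0 : ℝ) Tmax,
      HasDerivAt (fun x : ℝ => 2 * a * ((Tmax - x) ^ 3)⁻¹ + c * (Real.exp (k / x) * (1 - k / x) - 1))
        (6 * a * ((Tmax - x) ^ 4)⁻¹ + c * (Real.exp (k / x) * (k ^ 2 / x ^ 3))) x := by
    intro x hx
    have hx0 : x ≠ 0 := ne_of_gt hx.1
    have hTx : (0:ℝ) < Tmax - x := sub_pos.mpr hx.2
    have hTx0 : Tmax - x ≠ 0 := ne_of_gt hTx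
    have h1 : HasDerivAt (fun y : ℝ => Tmax - y) (-1) x := by
      simpa using (hasDerivAt_id x).const_sub Tmax
    have h3 : HasDerivAt (fun y : ℝ => 2 * a * ((Tmax - y) ^ 3)⁻¹)
        (2 * a * (-(3 * (Tmax - x) ^ 2 * (-1)) / ((Tmax - x) ^ 3) ^ 2)) x :=
      ((h1.pow 3).inv (pow_ne_zero 3 hTx0)).const_mul (2 * a)
    have h4 : HasDerivAt (fun y : ℝ => k / y) (k * -(x ^ 2)⁻¹) x := by
      simpa [div_eq_mul_inv] using (hasDerivAt_inv hx0).const_mul k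
    have h5 : HasDerivAt (fun y : ℝ => Real.exp (k / y))
        (Real.exp (k / x) * (k * -(x ^ 2)⁻¹)) x := h4.exp
    have h6 : HasDerivAt (fun y : ℝ => 1 - k / y) (-(k * -(x ^ 2)⁻¹)) x := h4.const_sub 1
    have h7 := ((h5.mul h6).sub_const 1).const_mul c
    have h8 := h3.add h7
    convert h8 using 1
    · rfl
    · rfl
    · rfl
    · field_simp
      ring
  apply strictConvexOn_of_deriv2_pos (convex_Ioo _ _)
  · exact fun x hx => (hderiv x hx).continuousAt.continuousWithinAt
  · intro x hx
    rw [interior_Ioo] at hx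
    have hEq : deriv (fun x : ℝ => a * ((Tmax - x) ^ 2)⁻¹ + c * x * (Real.exp (k / x) - 1))
        =ᶠ[nhds x]
        (fun x : ℝ => 2 * a * ((Tmax - x) ^ 3)⁻¹ + c * (Real.exp (k / x) * (1 - k / x) - 1)) := by
      filter_upwards [Ioo_mem_nhds hx.1 hx.2] with y hy
      exact (hderiv y hy).deriv
    have heq2 : deriv^[2] (fun x : ℝ => a * ((Tmax - x) ^ 2)⁻¹ + c * x * (Real.exp (k / x) - 1)) x
        = 6 * a * ((Tmax - x) ^ 4)⁻¹ + c * (Real.exp (k / x) * (k ^ 2 / x ^ 3)) := by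
      simp only [Function.iterate_succ, Function.iterate_zero, Function.comp_apply, id]
      rw [hEq.deriv_eq]
      exact (hderiv2 x hx).deriv
    rw [heq2]
    have hx0 : (0:ℝ) < x := hx.1
    have hTx : (0:ℝ) < Tmax - x := sub_pos.mpr hx.2
    positivity

/-- The per-round UAV energy `E(T) = a/(T_max − T)² + c·T·(2^{b/T} − 1)` is strictly
convex in the transmission time `T` on `(0, T_max)` (equation (44) of the paper). -/
theorem stmt_5 (a b c Tmax : ℝ) (ha : 0 < a) (hb : 0 < b) (hc : 0 < c)
    (hT : 0 < Tmax) :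
    StrictConvexOn ℝ (Set.Ioo (0 : ℝ) Tmax)
      (fun T : ℝ => a / (Tmax - T) ^ 2 + c * T * ((2 : ℝ) ^ (b / T) - 1)) := by
  have hk : 0 < b * Real.log 2 := mul_pos hb (Real.log_pos (by norm_num))
  apply (aux_strict a c (b * Real.log 2) Tmax ha hc hk hT).congr
  intro x hx
  have hx0 : x ≠ 0 := ne_of_gt hx.1
  have h2 : (2:ℝ) ^ (b / x) = Real.exp (b * Real.log 2 / x) := by
    rw [Real.rpow_def_of_pos (by norm_num : (0:ℝ) < 2)]
    ring_nf
  simp only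
  rw [h2]
  ring
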